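/- Suppose w : [0,∞) → (0,∞) is continuous and satisfies w(t) ≤ a e^{−t/c} + b ∫₀^t e^{−(t−τ)/c}(d + e·w(τ)) dτ for all t ≥ 0, with positive constants a, b, c, d, e satisfying b·e·c < 1. Then w is bounded: w(t) ≤ (a + b·d·c)/(1 − b·e·c) for all t ≥ 0. -/
import Mathlib


set_option maxHeartbeats 1000000 in
/-- Convolution-type Gronwall estimate: if w is continuous positive with
w(t) ≤ a e^{−t/c} + b ∫₀^t e^{−(t−τ)/c}(d + e w(τ)) dτ and b·e·c < 1, then
w(t) ≤ (a + b·d·c)/(1 − b·e·c) for all t ≥ 0. -/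
theorem stmt_19 (w : ℝ → ℝ) (a b c d e : ℝ)
    (ha : 0 < a) (hb : 0 < b) (hc : 0 < c) (hd : 0 < d) (he : 0 < e)
    (hcont : ContinuousOn w (Set.Ici 0))
    (hpos : ∀ t : ℝ, 0 ≤ t → 0 < w t)
    (hsmall : b * e * c < 1)
    (hineq : ∀ t : ℝ, 0 ≤ t →
      w t ≤ a * Real.exp (-t / c) +
        b * ∫ τ in (0:ℝ)..t, Real.exp (-(t - τ) / c) * (d + e * w τ)) :
    ∀ t : ℝ, 0 ≤ t → w t ≤ (a + b * d * c) / (1 - b * e * c) := by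
  set M := (a + b * d * c) / (1 - b * e * c) with hMdef
  have hden : 0 < 1 - b * e * c := by linarith
  have h1 : M * (1 - b * e * c) = a + b * d * c := div_mul_cancel₀ _ hden.ne'
  have haM : a < M := by nlinarith [mul_pos (mul_pos hb hd) hc, mul_pos (mul_pos hb he) hc]
  have hfix : b * c * (d + e * M) = M - a := by linear_combination -h1
  intro t ht
  by_contra hcon
  push_neg at hcon
  set S := {s : ℝ | 0 ≤ s ∧ M ≤ w s} with hSdef
  have hSne : S.Nonempty := ⟨t, ht, hcon.le⟩
  have hSbdd : BddBelow S := ⟨0, fun s hs => hs.1⟩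
  have hSclosed : IsClosed S := by
    have : S = Set.Ici (0:ℝ) ∩ w ⁻¹' Set.Ici M := by
      ext s; simp [hSdef, Set.mem_preimage, and_comm]
    rw [this]
    exact hcont.preimage_isClosed_of_isClosed isClosed_Ici isClosed_Ici
  set T := sInf S with hTdef
  have hTmem : T ∈ S := hSclosed.csInf_mem hSne hSbdd
  have hT0 : 0 ≤ T := hTmem.1
  have hwT : M ≤ w T := hTmem.2
  have hlt : ∀ s, 0 ≤ s → s < T → w s < M := fun s hs hsT =>
    lt_of_not_ge fun h => (csInf_le hSbdd ⟨hs, h⟩).not_gt hsT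
  rcases eq_or_lt_of_le hT0 with hT | hTpos
  · -- T = 0
    have := hineq 0 le_rfl
    simp at this
    have : w 0 ≤ a := by simpa using this
    have hw0 : M ≤ w 0 := hT ▸ hwT
    linarith
  · -- 0 < T
    have hwTle : w T ≤ M := by
      have htend : Filter.Tendsto w (nhdsWithin T (Set.Ico 0 T)) (nhds (w T)) := by
        have h := (hcont T (Set.mem_Ici.mpr hT0)).tendsto
        exact h.mono_left (nhdsWithin_mono T (fun x hx => hx.1))
      have hne : (nhdsWithin T (Set.Ico 0 T)).NeBot := by
        apply mem_closure_iff_nhdsWithin_neBot.mp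
        rw [closure_Ico hTpos.ne]
        exact Set.right_mem_Icc.mpr hT0
      refine le_of_tendsto htend ?_
      filter_upwards [self_mem_nhdsWithin] with s hs
      exact (hlt s hs.1 hs.2).le
    have hle : ∀ s ∈ Set.Icc 0 T, w s ≤ M := by
      intro s hs
      rcases eq_or_lt_of_le hs.2 with h | h
      · exact h ▸ hwTle
      · exact (hlt s hs.1 h).le
    have hint1 : IntervalIntegrable (fun τ => Real.exp (-(T - τ) / c) * (d + e * w τ))
        MeasureTheory.volume 0 T := by
      apply ContinuousOn.intervalIntegrable
      rw [Set.uIcc_of_le hT0]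
      apply ContinuousOn.mul
      · exact (Real.continuous_exp.comp (by continuity)).continuousOn
      · exact continuousOn_const.add (continuousOn_const.mul
          (hcont.mono (fun x hx => hx.1)))
    have hint2 : IntervalIntegrable (fun τ => Real.exp (-(T - τ) / c) * (d + e * M))
        MeasureTheory.volume 0 T :=
      ((Real.continuous_exp.comp (by continuity)).mul continuous_const).intervalIntegrable 0 T
    have hmono : (∫ τ in (0:ℝ)..T, Real.exp (-(T - τ) / c) * (d + e * w τ)) ≤
        ∫ τ in (0:ℝ)..T, Real.exp (-(T - τ) / c) * (d + e * M) := by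
      apply intervalIntegral.integral_mono_on hT0 hint1 hint2
      intro x hx
      have hwx := hle x hx
      have hexp : (0:ℝ) ≤ Real.exp (-(T - x) / c) := (Real.exp_pos _).le
      have h2 : d + e * w x ≤ d + e * M := by nlinarith [mul_le_mul_of_nonneg_left hwx he.le]
      exact mul_le_mul_of_nonneg_left h2 hexp
    have hcalc : (∫ τ in (0:ℝ)..T, Real.exp (-(T - τ) / c) * (d + e * M)) =
        c * (1 - Real.exp (-T / c)) * (d + e * M) := by
      have heq : (fun τ : ℝ => Real.exp (-(T - τ) / c) * (d + e * M))
          = fun τ : ℝ => (Real.exp (-T / c) * (d + e * M)) * Real.exp (τ / c) := by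
        funext τ
        rw [mul_assoc, mul_comm (d + e * M), ← mul_assoc, ← Real.exp_add]
        congr 2
        field_simp
        ring
      rw [heq, intervalIntegral.integral_const_mul,
        intervalIntegral.integral_comp_div (f := Real.exp) hc.ne', integral_exp]
      have hprod : Real.exp (-T / c) * Real.exp (T / c) = 1 := by
        rw [← Real.exp_add, neg_div, neg_add_cancel, Real.exp_zero]
      simp only [smul_eq_mul, zero_div, Real.exp_zero]
      linear_combination (c * (d + e * M)) * hprod
    have hbig := hineq T hT0
    set x := Real.exp (-T / c) with hx
    have hx0 : 0 < x := Real.exp_pos _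
    have hx1 : x ≤ 1 := Real.exp_le_one_iff.mpr (by
      apply div_nonpos_of_nonpos_of_nonneg <;> linarith)
    have hkey : w T ≤ a * x + b * (c * (1 - x) * (d + e * M)) := by
      calc w T ≤ a * x + b * ∫ τ in (0:ℝ)..T, Real.exp (-(T - τ) / c) * (d + e * w τ) := hbig
        _ ≤ a * x + b * ∫ τ in (0:ℝ)..T, Real.exp (-(T - τ) / c) * (d + e * M) := by
            have := mul_le_mul_of_nonneg_left hmono hb.le
            linarith
        _ = a * x + b * (c * (1 - x) * (d + e * M)) := by rw [hcalc]
    -- b * (c * (1-x) * (d+eM)) = (1-x) * (M - a)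
    have hrw : b * (c * (1 - x) * (d + e * M)) = (1 - x) * (M - a) := by
      linear_combination (1 - x) * hfix
    rw [hrw] at hkey
    nlinarith [mul_pos hx0 (sub_pos.mpr haM), mul_nonneg ha.le (sub_nonneg.mpr hx1)]
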